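/- Let A be a fixed real m×n matrix, q a non-negative integer, and ℓ a positive integer with ℓ ≤ min(n, rank(A)). Let G be a random real n×ℓ matrix whose entries are independent standard Gaussian random variables. Then, with probability 1, the matrix Y = (AAᵀ)^q·A·G has rank ℓ (full column rank). -/

import Mathlib

open Matrix MeasureTheory ProbabilityTheory

lemma gaussian_null_of_finite {s : Set ℝ} (hs : s.Finite) : gaussianReal 0 1 s = 0 :=
  (gaussianReal_absolutelyContinuous 0 one_ne_zero) (hs.measure_zero volume)

lemma measurable_mv_eval {σ : Type*} [Countable σ] (P : MvPolynomial σ ℝ) :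
    Measurable fun x : σ → ℝ => MvPolynomial.eval x P :=
  (MvPolynomial.continuous_eval P).measurable

lemma gaussian_pi_poly_null : ∀ (N : ℕ) (P : MvPolynomial (Fin N) ℝ), P ≠ 0 →
    (Measure.pi fun _ : Fin N => gaussianReal 0 1)
      {x | MvPolynomial.eval x P = 0} = 0 := by
  intro N
  induction N with
  | zero =>
    intro P hP
    obtain ⟨c, rfl⟩ := MvPolynomial.C_surjective (Fin 0) P
    have hc : c ≠ 0 := fun h => hP (by rw [h, map_zero])
    have : {x : Fin 0 → ℝ | MvPolynomial.eval x (MvPolynomial.C c) = 0} = ∅ := by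
      ext x; simp [hc]
    rw [this]; simp
  | succ N ih =>
    intro P hP
    set μ : Measure ℝ := gaussianReal 0 1 with hμ
    have mp := measurePreserving_piFinSuccAbove (fun _ : Fin (N + 1) => μ) 0
    set e := MeasurableEquiv.piFinSuccAbove (fun _ : Fin (N + 1) => ℝ) 0 with he
    set S := {x : Fin (N + 1) → ℝ | MvPolynomial.eval x P = 0} with hSdef
    have hS : MeasurableSet S := measurable_mv_eval P (measurableSet_singleton 0)
    have hT : MeasurableSet (e.symm ⁻¹' S) := hS.preimage e.symm.measurable
    have hpre : e ⁻¹' (e.symm ⁻¹' S) = S := by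
      ext x; simp
    have key : (Measure.pi fun _ : Fin (N + 1) => μ) S
        = (μ.prod (Measure.pi fun _ : Fin N => μ)) (e.symm ⁻¹' S) := by
      rw [← mp.measure_preimage hT.nullMeasurableSet, hpre]
    rw [key]
    set Q := MvPolynomial.finSuccEquiv ℝ N P with hQdef
    have hQ : Q ≠ 0 := by
      intro h
      apply hP
      have h2 := congrArg (MvPolynomial.finSuccEquiv ℝ N).symm h
      rw [AlgEquiv.symm_apply_apply, map_zero] at h2
      exact h2
    have hc : Q.leadingCoeff ≠ 0 := Polynomial.leadingCoeff_ne_zero.mpr hQ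
    have hIH := ih Q.leadingCoeff hc
    have hae : ∀ᵐ s ∂(Measure.pi fun _ : Fin N => μ),
        MvPolynomial.eval s Q.leadingCoeff ≠ 0 := by
      rw [ae_iff]
      simpa [not_not] using hIH
    rw [Measure.prod_apply_symm hT]
    have hz : (fun s => μ ((fun y => (y, s)) ⁻¹' (e.symm ⁻¹' S)))
        =ᵐ[Measure.pi fun _ : Fin N => μ] 0 := by
      filter_upwards [hae] with s hs
      have hslice : ((fun y => (y, s)) ⁻¹' (e.symm ⁻¹' S))
          ⊆ {y : ℝ | (Q.map (MvPolynomial.eval s)).IsRoot y} := by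
        intro y hy
        simp only [Set.mem_preimage, hSdef, Set.mem_setOf_eq] at hy
        have hesymm : e.symm (y, s) = Fin.cons y s := by
          simp only [he, MeasurableEquiv.piFinSuccAbove, MeasurableEquiv.symm_mk,
            MeasurableEquiv.coe_mk, Equiv.symm_symm, Fin.insertNthEquiv_zero]
          rfl
        rw [hesymm, MvPolynomial.eval_eq_eval_mv_eval'] at hy
        exact hy
      have hQs : Q.map (MvPolynomial.eval s) ≠ 0 := by
        intro h
        apply hs
        have h2 := congrArg (fun p => Polynomial.coeff p Q.natDegree) h
        simp only [Polynomial.coeff_map, Polynomial.coeff_zero] at h2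
        rw [Polynomial.leadingCoeff]
        exact h2
      have hfin : ({y : ℝ | (Q.map (MvPolynomial.eval s)).IsRoot y}).Finite :=
        Polynomial.finite_setOf_isRoot hQs
      simpa using measure_mono_null hslice (gaussian_null_of_finite hfin)
    rw [lintegral_congr_ae hz]
    simp

lemma gaussian_pi_poly_null_prod (n ℓ : ℕ) (P : MvPolynomial (Fin n × Fin ℓ) ℝ)
    (hP : P ≠ 0) :
    (Measure.pi fun _ : Fin n × Fin ℓ => gaussianReal 0 1)
      {x | MvPolynomial.eval x P = 0} = 0 := by
  set f : Fin (n * ℓ) ≃ Fin n × Fin ℓ := finProdFinEquiv.symm with hf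
  have mp := measurePreserving_piCongrLeft (fun _ : Fin n × Fin ℓ => gaussianReal 0 1) f
  set E := MeasurableEquiv.piCongrLeft (fun _ : Fin n × Fin ℓ => ℝ) f with hE
  set S := {x : Fin n × Fin ℓ → ℝ | MvPolynomial.eval x P = 0} with hS
  have hSm : MeasurableSet S := measurable_mv_eval P (measurableSet_singleton 0)
  rw [← mp.measure_preimage
    (hSm.nullMeasurableSet :
      NullMeasurableSet S (Measure.pi fun _ : Fin n × Fin ℓ => gaussianReal 0 1))]
  have hEx : ∀ (x : Fin (n * ℓ) → ℝ), ⇑E x = x ∘ f.symm := by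
    intro x
    funext b
    conv_lhs => rw [show b = f (f.symm b) by simp]
    rw [hE, MeasurableEquiv.piCongrLeft_apply_apply]
    rfl
  have hpre : ⇑E ⁻¹' S
      = {x : Fin (n * ℓ) → ℝ |
          MvPolynomial.eval x (MvPolynomial.rename f.symm P) = 0} := by
    ext x
    simp only [Set.mem_preimage, hS, Set.mem_setOf_eq, hEx x, MvPolynomial.eval_rename]
  rw [hpre]
  refine gaussian_pi_poly_null (n * ℓ) _ ?_
  intro h
  exact hP (MvPolynomial.rename_injective _ f.symm.injective (by simpa using h))

lemma map_uncurry_gaussian (n ℓ : ℕ) :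
    Measure.map (fun g : Fin n → Fin ℓ → ℝ => fun p : Fin n × Fin ℓ => g p.1 p.2)
      (Measure.pi fun _ : Fin n => Measure.pi fun _ : Fin ℓ => gaussianReal 0 1)
      = Measure.pi fun _ : Fin n × Fin ℓ => gaussianReal 0 1 := by
  refine (Measure.pi_eq fun t ht => ?_).symm
  have hmeas : Measurable (fun g : Fin n → Fin ℓ → ℝ => fun p : Fin n × Fin ℓ => g p.1 p.2) :=
    measurable_pi_lambda _ fun p => (measurable_pi_apply p.2).comp (measurable_pi_apply p.1)
  rw [Measure.map_apply hmeas (MeasurableSet.univ_pi ht)]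
  have hpre : (fun g : Fin n → Fin ℓ → ℝ => fun p : Fin n × Fin ℓ => g p.1 p.2) ⁻¹'
        Set.pi Set.univ t
      = Set.pi Set.univ (fun i => Set.pi Set.univ fun j => t (i, j)) := by
    ext g
    simp only [Set.mem_preimage, Set.mem_pi, Set.mem_univ, forall_true_left, Prod.forall,
      true_implies]
  rw [hpre, Measure.pi_pi]
  simp_rw [Measure.pi_pi]
  exact (Fintype.prod_prod_type (f := fun p : Fin n × Fin ℓ => (gaussianReal 0 1) (t p))).symm

section MatrixPart
variable {m n : ℕ}

lemma sym_pow_mulVec_zero (A : Matrix (Fin m) (Fin n) ℝ) :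
    ∀ (k : ℕ) (v : Fin m → ℝ), ((A * Aᵀ) ^ (k + 1)).mulVec v = 0 →
      (A * Aᵀ).mulVec v = 0 := by
  intro k
  induction k with
  | zero => intro v h; simpa using h
  | succ k ih =>
    intro v h
    have h1 : ((A * Aᵀ) ^ (k + 1)).mulVec ((A * Aᵀ).mulVec v) = 0 := by
      rw [Matrix.mulVec_mulVec, ← pow_succ]
      exact h
    have h2 := ih _ h1
    have h3 : ((A * Aᵀ)ᵀ * (A * Aᵀ)).mulVec v = 0 := by
      have hsym : (A * Aᵀ)ᵀ = A * Aᵀ := by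
        rw [Matrix.transpose_mul, Matrix.transpose_transpose]
      rw [hsym, ← Matrix.mulVec_mulVec]
      exact h2
    have := Matrix.ker_mulVecLin_transpose_mul_self (A * Aᵀ)
    have hmem : v ∈ LinearMap.ker ((A * Aᵀ)ᵀ * (A * Aᵀ)).mulVecLin := by
      rw [LinearMap.mem_ker, Matrix.mulVecLin_apply]; exact h3
    rw [this, LinearMap.mem_ker, Matrix.mulVecLin_apply] at hmem
    exact hmem

lemma ker_pow_mul (A : Matrix (Fin m) (Fin n) ℝ) (q : ℕ) :
    LinearMap.ker ((A * Aᵀ) ^ q * A).mulVecLin = LinearMap.ker A.mulVecLin := by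
  ext x
  simp only [LinearMap.mem_ker, Matrix.mulVecLin_apply]
  constructor
  · intro h
    rcases q with _ | k
    · simpa using h
    · have h1 : ((A * Aᵀ) ^ (k + 1)).mulVec (A.mulVec x) = 0 := by
        rw [Matrix.mulVec_mulVec]; exact h
      have h2 := sym_pow_mulVec_zero A k _ h1
      -- A * Aᵀ = (Aᵀ)ᵀ * Aᵀ, so A.mulVec x ∈ ker Aᵀ
      have h3 : Aᵀ.mulVec (A.mulVec x) = 0 := by
        have hk := Matrix.ker_mulVecLin_transpose_mul_self Aᵀ
        have hmem : A.mulVec x ∈ LinearMap.ker ((Aᵀᵀ * Aᵀ)).mulVecLin := by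
          rw [LinearMap.mem_ker, Matrix.mulVecLin_apply, Matrix.transpose_transpose]
          exact h2
        rw [hk, LinearMap.mem_ker, Matrix.mulVecLin_apply] at hmem
        exact hmem
      have h4 : (Aᵀ * A).mulVec x = 0 := by
        rw [← Matrix.mulVec_mulVec]; exact h3
      have hk := Matrix.ker_mulVecLin_transpose_mul_self A
      have hmem : x ∈ LinearMap.ker ((Aᵀ * A)).mulVecLin := by
        rw [LinearMap.mem_ker, Matrix.mulVecLin_apply]; exact h4
      rw [hk, LinearMap.mem_ker, Matrix.mulVecLin_apply] at hmem
      exact hmem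
  · intro h
    rw [← Matrix.mulVec_mulVec, h, Matrix.mulVec_zero]

lemma rank_pow_mul (A : Matrix (Fin m) (Fin n) ℝ) (q : ℕ) :
    ((A * Aᵀ) ^ q * A).rank = A.rank := by
  have h1 := LinearMap.finrank_range_add_finrank_ker ((A * Aᵀ) ^ q * A).mulVecLin
  have h2 := LinearMap.finrank_range_add_finrank_ker A.mulVecLin
  rw [ker_pow_mul] at h1
  have e1 : ((A * Aᵀ) ^ q * A).rank
      = Module.finrank ℝ (LinearMap.range ((A * Aᵀ) ^ q * A).mulVecLin) := rfl
  have e2 : A.rank = Module.finrank ℝ (LinearMap.range A.mulVecLin) := rfl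
  omega

lemma rank_of_det_ne_zero {ℓ : ℕ} (M : Matrix (Fin m) (Fin ℓ) ℝ)
    (h : (Mᵀ * M).det ≠ 0) : M.rank = ℓ := by
  classical
  have hu : IsUnit (Mᵀ * M) := (Matrix.isUnit_iff_isUnit_det _).mpr (isUnit_iff_ne_zero.mpr h)
  have := Matrix.rank_of_isUnit _ hu
  rw [Matrix.rank_transpose_mul_self] at this
  simpa using this

lemma det_ne_zero_of_rank {ℓ : ℕ} (M : Matrix (Fin m) (Fin ℓ) ℝ)
    (h : M.rank = ℓ) : (Mᵀ * M).det ≠ 0 := by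
  classical
  intro hdet
  obtain ⟨v, hv0, hv⟩ := (Matrix.exists_mulVec_eq_zero_iff).mpr hdet
  have hrank : (Mᵀ * M).rank = ℓ := by rw [Matrix.rank_transpose_mul_self, h]
  have h1 := LinearMap.finrank_range_add_finrank_ker (Mᵀ * M).mulVecLin
  have e1 : (Mᵀ * M).rank = Module.finrank ℝ (LinearMap.range (Mᵀ * M).mulVecLin) := rfl
  rw [Module.finrank_fin_fun] at h1
  have hker0 : Module.finrank ℝ (LinearMap.ker (Mᵀ * M).mulVecLin) = 0 := by omega
  have hbot : LinearMap.ker (Mᵀ * M).mulVecLin = ⊥ := Submodule.finrank_eq_zero.mp hker0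
  have hmem : v ∈ LinearMap.ker (Mᵀ * M).mulVecLin := by
    rw [LinearMap.mem_ker, Matrix.mulVecLin_apply]; exact hv
  rw [hbot, Submodule.mem_bot] at hmem
  exact hv0 hmem

lemma exists_full_rank_mul (B : Matrix (Fin m) (Fin n) ℝ) (ℓ : ℕ) (hℓ : ℓ ≤ B.rank) :
    ∃ G : Matrix (Fin n) (Fin ℓ) ℝ, (B * G).rank = ℓ := by
  classical
  set V := LinearMap.range B.mulVecLin with hV
  have hr : ℓ ≤ Module.finrank ℝ V := hℓ
  let b := Module.finBasis ℝ V
  let v : Fin ℓ → (Fin m → ℝ) := fun j => (b (Fin.castLE hr j) : Fin m → ℝ)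
  have hli : LinearIndependent ℝ v := by
    have h1 : LinearIndependent ℝ fun j : Fin ℓ => b (Fin.castLE hr j) :=
      b.linearIndependent.comp _ (Fin.castLE_injective _)
    exact h1.map' V.subtype (Submodule.ker_subtype V)
  have hx : ∀ j, ∃ x, B.mulVec x = v j := by
    intro j
    obtain ⟨x, hx⟩ := (b (Fin.castLE hr j)).2
    exact ⟨x, hx⟩
  choose x hxeq using hx
  refine ⟨Matrix.of fun k j => x j k, ?_⟩
  have hBG : B * Matrix.of (fun k j => x j k) = Matrix.of fun i j => v j i := by
    ext i j
    rw [Matrix.mul_apply]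
    have := congrFun (hxeq j) i
    simpa [Matrix.mulVec, dotProduct] using this
  rw [hBG, Matrix.rank_eq_finrank_span_cols]
  have hrange : Set.range (Matrix.of fun i j => v j i).col = Set.range v := by
    congr
  rw [hrange, finrank_span_eq_card hli, Fintype.card_fin]

end MatrixPart

/-- Let A be a fixed real m×n matrix, q a non-negative integer, and ℓ a positive
integer with ℓ ≤ min(n, rank(A)). If G is a standard Gaussian n×ℓ matrix, then with
probability 1 the matrix Y = (AAᵀ)^q·A·G has full column rank ℓ. -/
theorem gaussian_rsvd_sample_full_column_rank
    {m n : ℕ} (A : Matrix (Fin m) (Fin n) ℝ) (q ℓ : ℕ)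
    (hℓ0 : 0 < ℓ) (hℓn : ℓ ≤ n) (hℓr : ℓ ≤ A.rank) :
    ∀ᵐ g ∂(Measure.pi fun _ : Fin n => Measure.pi fun _ : Fin ℓ => gaussianReal 0 1),
      ((A * Aᵀ) ^ q * A * Matrix.of g).rank = ℓ := by
  classical
  set B : Matrix (Fin m) (Fin n) ℝ := (A * Aᵀ) ^ q * A with hBdef
  have hrankB : ℓ ≤ B.rank := by rw [hBdef, rank_pow_mul]; exact hℓr
  -- the polynomial
  set Pm : Matrix (Fin m) (Fin ℓ) (MvPolynomial (Fin n × Fin ℓ) ℝ) :=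
    Matrix.of fun i j => ∑ k, MvPolynomial.C (B i k) * MvPolynomial.X (k, j) with hPm
  set P : MvPolynomial (Fin n × Fin ℓ) ℝ := (Pmᵀ * Pm).det with hPdef
  have hP_eval : ∀ h : Fin n × Fin ℓ → ℝ,
      MvPolynomial.eval h P
        = (((B * Matrix.of fun k j => h (k, j))ᵀ
            * (B * Matrix.of fun k j => h (k, j)))).det := by
    intro h
    rw [hPdef, RingHom.map_det]
    congr 1
    ext a c
    simp only [hPm, RingHom.mapMatrix_apply, Matrix.mul_apply, Matrix.map_apply,
      Matrix.transpose_apply, Matrix.of_apply, map_sum, _root_.map_mul,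
      MvPolynomial.eval_C, MvPolynomial.eval_X, Finset.mul_sum, Finset.sum_mul]
  -- P ≠ 0
  obtain ⟨G₀, hG₀⟩ := exists_full_rank_mul B ℓ hrankB
  have hPne : P ≠ 0 := by
    intro h0
    have := hP_eval (fun p => G₀ p.1 p.2)
    rw [h0, map_zero] at this
    have hG : (Matrix.of fun k j => (fun p : Fin n × Fin ℓ => G₀ p.1 p.2) (k, j)) = G₀ := rfl
    rw [hG] at this
    exact det_ne_zero_of_rank _ hG₀ this.symm
  -- measure glue
  set unc : (Fin n → Fin ℓ → ℝ) → (Fin n × Fin ℓ → ℝ) :=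
    fun g => fun p => g p.1 p.2 with hunc
  have hmeas : Measurable unc :=
    measurable_pi_lambda _ fun p => (measurable_pi_apply p.2).comp (measurable_pi_apply p.1)
  set T : Set (Fin n × Fin ℓ → ℝ) := {x | MvPolynomial.eval x P = 0} with hT
  have hTm : MeasurableSet T := measurable_mv_eval P (measurableSet_singleton 0)
  rw [ae_iff]
  refine measure_mono_null (t := unc ⁻¹' T) ?_ ?_
  · intro g hg
    simp only [Set.mem_setOf_eq] at hg
    simp only [Set.mem_preimage, hT, Set.mem_setOf_eq]
    by_contra hne
    apply hg
    have := hP_eval (unc g)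
    have hG : (Matrix.of fun k j => unc g (k, j)) = Matrix.of g := rfl
    rw [hG] at this
    rw [this] at hne
    exact rank_of_det_ne_zero _ hne
  · have h0 := gaussian_pi_poly_null_prod n ℓ P hPne
    calc (Measure.pi fun _ : Fin n => Measure.pi fun _ : Fin ℓ => gaussianReal 0 1) (unc ⁻¹' T)
        = (Measure.map unc
            (Measure.pi fun _ : Fin n => Measure.pi fun _ : Fin ℓ => gaussianReal 0 1)) T :=
          (Measure.map_apply hmeas hTm).symm
      _ = 0 := by rw [map_uncurry_gaussian]; exact h0
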